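/- The equation x⁴ + 4y⁴ = z² has no solutions in positive integers (equivalently, there is no integer right triangle with legs 2s² and r² and square area). -/

import Mathlib

theorem descent_aux : ∀ N : ℕ, ∀ x y z : ℤ, z.natAbs = N → x ≠ 0 → y ≠ 0 → 0 < z →
    x ^ 4 + 4 * y ^ 4 ≠ z ^ 2 := by
  intro N
  induction N using Nat.strong_induction_on with
  | _ N IH =>
  intro x y z hN hx hy hz heq
  subst hN
  -- Step A: reduce to the case gcd x y = 1
  rcases Nat.lt_or_ge 1 (Int.gcd x y) with hg | hg
  · -- gcd > 1 : divide out
    set g : ℤ := (Int.gcd x y : ℤ) with hgdef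
    have hg2 : (2 : ℤ) ≤ g := by rw [hgdef]; exact_mod_cast Nat.succ_le_of_lt hg
    obtain ⟨x₁, hx₁⟩ := (Int.gcd_dvd_left x y : g ∣ x)
    obtain ⟨y₁, hy₁⟩ := (Int.gcd_dvd_right x y : g ∣ y)
    have hzsq : z ^ 2 = (g ^ 2) ^ 2 * (x₁ ^ 4 + 4 * y₁ ^ 4) := by
      linear_combination (-1) * heq + (x ^ 3 + x ^ 2 * (g * x₁) + x * (g * x₁) ^ 2 +
        (g * x₁) ^ 3) * hx₁ + 4 * (y ^ 3 + y ^ 2 * (g * y₁) + y * (g * y₁) ^ 2 +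
        (g * y₁) ^ 3) * hy₁
    have hdvd : g ^ 2 ∣ z := by
      rw [← Int.pow_dvd_pow_iff (two_ne_zero)]
      exact ⟨x₁ ^ 4 + 4 * y₁ ^ 4, hzsq⟩
    obtain ⟨z₁, hz₁⟩ := hdvd
    have hg0 : (0:ℤ) < g := by linarith
    have heq1 : x₁ ^ 4 + 4 * y₁ ^ 4 = z₁ ^ 2 := by
      have h4 : (g ^ 2) ^ 2 ≠ 0 := by positivity
      apply mul_left_cancel₀ h4
      rw [← hzsq, hz₁]; ring
    have hz₁0 : 0 < z₁ := by
      by_contra h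
      push_neg at h
      have : g ^ 2 * z₁ ≤ 0 := mul_nonpos_of_nonneg_of_nonpos (by positivity) h
      rw [← hz₁] at this; linarith
    have hg4 : (4:ℤ) ≤ g ^ 2 := by nlinarith
    have hmul : 4 * z₁ ≤ g ^ 2 * z₁ := mul_le_mul_of_nonneg_right hg4 (le_of_lt hz₁0)
    have hlt : z₁.natAbs < z.natAbs := by
      apply Int.natAbs_lt_natAbs_of_nonneg_of_lt (le_of_lt hz₁0)
      rw [hz₁]; linarith
    exact IH z₁.natAbs hlt x₁ y₁ z₁ rfl
      (fun h => hx (by rw [hx₁, h, mul_zero]))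
      (fun h => hy (by rw [hy₁, h, mul_zero])) hz₁0 heq1
  · -- gcd = 1
    have hgcd : Int.gcd x y = 1 := by
      have := Int.gcd_pos_of_ne_zero_left y hx
      omega
    rcases Int.emod_two_eq_zero_or_one x with hx2 | hx2
    · -- x even : descend directly
      obtain ⟨x₁, hx₁⟩ := Int.dvd_of_emod_eq_zero hx2
      have hzsq : z ^ 2 = 2 ^ 2 * (y ^ 4 + 4 * x₁ ^ 4) := by
        rw [hx₁] at heq; linear_combination -heq
      have hdvd : (2:ℤ) ∣ z := by
        rw [← Int.pow_dvd_pow_iff (two_ne_zero)]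
        exact ⟨y ^ 4 + 4 * x₁ ^ 4, hzsq⟩
      obtain ⟨z₁, hz₁⟩ := hdvd
      have heq1 : y ^ 4 + 4 * x₁ ^ 4 = z₁ ^ 2 := by
        apply mul_left_cancel₀ (by norm_num : (4:ℤ) ≠ 0)
        rw [show (4:ℤ) * (y ^ 4 + 4 * x₁ ^ 4) = 2 ^ 2 * (y ^ 4 + 4 * x₁ ^ 4) by ring, ← hzsq,
          hz₁]; ring
      have hz₁0 : 0 < z₁ := by omega
      have hlt : z₁.natAbs < z.natAbs := by
        apply Int.natAbs_lt_natAbs_of_nonneg_of_lt (le_of_lt hz₁0)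
        omega
      exact IH z₁.natAbs hlt y x₁ z₁ rfl hy
        (fun h => hx (by rw [hx₁, h, mul_zero])) hz₁0 heq1
    · -- x odd : the real descent
      have ht : PythagoreanTriple (x ^ 2) (2 * y ^ 2) z := by
        delta PythagoreanTriple; linear_combination heq
      have hxy : IsCoprime x y := Int.isCoprime_iff_gcd_eq_one.mpr hgcd
      have hx2' : IsCoprime x 2 := by
        apply Int.isCoprime_iff_gcd_eq_one.mpr
        have hodd : Odd x := Int.odd_iff.mpr hx2
        have : Odd x.natAbs := Int.natAbs_odd.mpr hodd
        simpa [Int.gcd] using Nat.coprime_two_right.mpr this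
      have h2 : Int.gcd (x ^ 2) (2 * y ^ 2) = 1 := by
        apply Int.isCoprime_iff_gcd_eq_one.mp
        exact IsCoprime.pow_left (hx2'.mul_right hxy.pow_right)
      have hx22 : x ^ 2 % 2 = 1 := by
        rw [sq, Int.mul_emod, hx2]; decide
      obtain ⟨m, n, ht1, ht2, ht3, ht4, _ht5, ht6⟩ := ht.coprime_classification' h2 hx22 hz
      have hyn : y ^ 2 = m * n := by linarith
      have hm0 : 0 < m := by
        rcases lt_or_eq_of_le ht6 with h | h
        · exact h
        · exfalso; apply hy; have : y ^ 2 = 0 := by rw [hyn, ← h]; ring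
          exact pow_eq_zero_iff (two_ne_zero) |>.mp this
      have hn0 : n ≠ 0 := by
        intro h; apply hy
        have : y ^ 2 = 0 := by rw [hyn, h, mul_zero]
        exact pow_eq_zero_iff (two_ne_zero) |>.mp this
      have htt : PythagoreanTriple x n m := by
        delta PythagoreanTriple; linear_combination ht1
      have h3 : Int.gcd x n = 1 := by
        apply Int.isCoprime_iff_gcd_eq_one.mp
        apply @IsCoprime.of_mul_left_left _ _ _ x
        rw [← sq, ht1, (by ring : m ^ 2 - n ^ 2 = m ^ 2 + -n * n)]
        exact (Int.isCoprime_iff_gcd_eq_one.mpr ht4).pow_left.add_mul_right_left (-n)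
      obtain ⟨r, s, _htt1, htt2, htt3, htt4, htt5, _htt6⟩ := htt.coprime_classification' h3 hx2 hm0
      -- y^2 = 2 * (m * (r * s))
      have hy2 : y ^ 2 = 2 * (m * (r * s)) := by rw [hyn, htt2]; ring
      have h2y : (2:ℤ) ∣ y := by
        apply @Int.Prime.dvd_pow' _ 2 _ Nat.prime_two
        exact ⟨m * (r * s), hy2⟩
      obtain ⟨y₁, hy₁⟩ := h2y
      have hy₁0 : y₁ ≠ 0 := fun h => hy (by rw [hy₁, h, mul_zero])
      have hkey : m * (r * s) = 2 * y₁ ^ 2 := by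
        apply mul_left_cancel₀ (by norm_num : (2:ℤ) ≠ 0)
        rw [← hy2, hy₁]; ring
      have hcp : IsCoprime m (r * s) := by
        rw [htt3]
        exact Int.isCoprime_of_sq_sum' (Int.isCoprime_iff_gcd_eq_one.mpr htt4)
      have hrs : IsCoprime r s := Int.isCoprime_iff_gcd_eq_one.mpr htt4
      have hmz : m < z := by
        have h1 : m ≤ m ^ 2 := Int.le_self_sq m
        have h2 : (0:ℤ) < n ^ 2 := by positivity
        linarith [ht3]
      -- helper applied in both parity cases
      have main : ∀ r s : ℤ, IsCoprime m (r * s) → IsCoprime r s → r % 2 = 0 →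
          m * (r * s) = 2 * y₁ ^ 2 → m = r ^ 2 + s ^ 2 → False := by
        intro r s hcp hrs hre hkey hm
        obtain ⟨r₁, hr₁⟩ := Int.dvd_of_emod_eq_zero hre
        have hkey1 : m * (r₁ * s) = y₁ ^ 2 := by
          apply mul_left_cancel₀ (by norm_num : (2:ℤ) ≠ 0)
          rw [← hkey, hr₁]; ring
        have hcp1 : Int.gcd m (r₁ * s) = 1 := by
          apply Int.isCoprime_iff_gcd_eq_one.mp
          apply IsCoprime.of_mul_right_right (y := 2)
          rw [show 2 * (r₁ * s) = r * s by rw [hr₁]; ring]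
          exact hcp
        have hrs1 : Int.gcd r₁ s = 1 := by
          apply Int.isCoprime_iff_gcd_eq_one.mp
          apply IsCoprime.of_mul_left_right (x := 2)
          rw [show 2 * r₁ = r from hr₁.symm]
          exact hrs
        obtain ⟨i, hi⟩ := Int.sq_of_gcd_eq_one hcp1 (hkey1.trans (by ring))
        have hmi : m = i ^ 2 := by
          rcases hi with h | h
          · exact h
          · exfalso; have := sq_nonneg i; linarith
        have hrspos : 0 < r₁ * s := by
          by_contra h
          push_neg at h
          have h1 : m * (r₁ * s) ≤ 0 := mul_nonpos_of_nonneg_of_nonpos (le_of_lt hm0) h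
          have h2 : (0:ℤ) < y₁ ^ 2 := by positivity
          rw [hkey1] at h1; linarith
        have hkey2 : (r₁ * s) * m = y₁ ^ 2 := by rw [mul_comm]; exact hkey1
        obtain ⟨d, hd⟩ := Int.sq_of_gcd_eq_one (by rwa [Int.gcd_comm] at hcp1) hkey2
        have hd' : r₁ * s = d ^ 2 := by
          rcases hd with h | h
          · exact h
          · exfalso; have := sq_nonneg d; linarith
        obtain ⟨e, he⟩ := Int.sq_of_gcd_eq_one hrs1 hd'
        obtain ⟨f, hf⟩ := Int.sq_of_gcd_eq_one (by rwa [Int.gcd_comm] at hrs1)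
          (by rw [mul_comm]; exact hd')
        have he2 : r₁ ^ 2 = e ^ 4 := by rcases he with h | h <;> (rw [h]; ring)
        have hf2 : s ^ 2 = f ^ 4 := by rcases hf with h | h <;> (rw [h]; ring)
        have he0 : e ≠ 0 := by
          intro h; rw [h] at he
          have : r₁ = 0 := by rcases he with h' | h' <;> (rw [h']; ring)
          rw [this, zero_mul] at hrspos; exact lt_irrefl 0 hrspos
        have hf0 : f ≠ 0 := by
          intro h; rw [h] at hf
          have : s = 0 := by rcases hf with h' | h' <;> (rw [h']; ring)
          rw [this, mul_zero] at hrspos; exact lt_irrefl 0 hrspos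
        have hi0 : i ≠ 0 := by
          intro h
          apply absurd hm0
          rw [hmi, h]; norm_num
        have heqnew : f ^ 4 + 4 * e ^ 4 = ((i.natAbs : ℤ)) ^ 2 := by
          have habs : ((i.natAbs : ℤ)) ^ 2 = i ^ 2 := by
            rw [← Int.abs_eq_natAbs, sq_abs]
          rw [habs, ← hmi, hm, hr₁, ← he2, ← hf2]; ring
        have hlt : i.natAbs < z.natAbs := by
          have h1 : (i.natAbs : ℤ) ≤ i ^ 2 := Int.natAbs_le_self_sq i
          have h2 : (i.natAbs : ℤ) < (z.natAbs : ℤ) := by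
            rw [← Int.eq_natAbs_of_nonneg (le_of_lt hz)]
            calc (i.natAbs : ℤ) ≤ i ^ 2 := h1
            _ = m := hmi.symm
            _ < z := hmz
          exact_mod_cast h2
        exact IH i.natAbs hlt f e (i.natAbs : ℤ) (Int.natAbs_natCast _) hf0 he0
          (by exact_mod_cast Int.natAbs_pos.mpr hi0) heqnew
      rcases htt5 with ⟨hre, _⟩ | ⟨_, hse⟩
      · exact main r s hcp hrs hre hkey htt3
      · exact main s r (by rwa [mul_comm] at hcp) hrs.symm hse
          (by rw [← hkey]; ring) (by rw [htt3]; ring)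

/-- The equation `x⁴ + 4y⁴ = z²` has no solutions in positive integers. -/
theorem no_x4_add_4y4_eq_z2 (x y z : ℤ) (hx : 0 < x) (hy : 0 < y) (hz : 0 < z) :
    x ^ 4 + 4 * y ^ 4 ≠ z ^ 2 :=
  descent_aux z.natAbs x y z rfl (ne_of_gt hx) (ne_of_gt hy) hz
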